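/- (Theorem 2.3) Arbitrary two nonzero elements of the Heisenberg algebra are left comeasurable: for all f, g ∈ H with f ≠ 0 and g ≠ 0, there exist a, b ∈ H with a ≠ 0, b ≠ 0 and a ∘ f = b ∘ g. -/

import Mathlib

open Polynomial

/-- Multiplication by X on ℂ[X]. -/
noncomputable def M : Module.End ℂ (Polynomial ℂ) := LinearMap.mulLeft ℂ Polynomial.X

/-- Formal derivative on ℂ[X]. -/
noncomputable def D : Module.End ℂ (Polynomial ℂ) := Polynomial.derivative

namespace Heis

open Module Submodule Finset
open scoped Classical

local notation "E" => Module.End ℂ (Polynomial ℂ)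

lemma M_apply (p : Polynomial ℂ) : M p = X * p := rfl
lemma D_apply (p : Polynomial ℂ) : D p = derivative p := rfl

lemma one_ne_zero_E : (1 : E) ≠ 0 := by
  intro h
  have := congrArg (fun φ : E => φ (1 : Polynomial ℂ)) h
  simp at this

lemma D_mul_M : D * M = M * D + (1 : E) := by
  apply LinearMap.ext
  intro p
  simp [Module.End.mul_apply, LinearMap.add_apply, Module.End.one_apply, M_apply, D_apply,
    derivative_mul]
  ring

lemma D_mul_M_pow (a : ℕ) : D * M ^ a = M ^ a * D + (a : ℂ) • M ^ (a - 1) := by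
  induction a with
  | zero => simp
  | succ k ih =>
    have h1 : D * M ^ (k + 1) = (D * M ^ k) * M := by
      rw [mul_assoc, ← pow_succ]
    have h3 : (k : ℂ) • M ^ (k - 1) * M = (k : ℂ) • M ^ k := by
      cases k with
      | zero => simp
      | succ m => rw [smul_mul_assoc, Nat.add_sub_cancel, ← pow_succ]
    rw [h1, ih, add_mul, h3, mul_assoc, D_mul_M, mul_add, mul_one, ← mul_assoc, ← pow_succ,
      Nat.add_sub_cancel]
    push_cast
    rw [add_smul, one_smul]
    abel

/-- monomials of total degree at most `n` -/
noncomputable def T (n : ℕ) : Finset E :=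
  ((Finset.range (n + 1) ×ˢ Finset.range (n + 1)).filter fun p => p.1 + p.2 ≤ n).image
    fun p => M ^ p.1 * D ^ p.2

/-- the filtration -/
noncomputable def V (n : ℕ) : Submodule ℂ E := Submodule.span ℂ (T n : Set E)

lemma pow_mem_V {i j n : ℕ} (h : i + j ≤ n) : M ^ i * D ^ j ∈ V n := by
  apply subset_span
  simp only [T, Finset.coe_image, Set.mem_image, Finset.mem_coe, Finset.mem_filter,
    Finset.mem_product, Finset.mem_range]
  exact ⟨(i, j), ⟨⟨by omega, by omega⟩, h⟩, rfl⟩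

lemma V_mono {n m : ℕ} (h : n ≤ m) : V n ≤ V m := by
  apply span_le.2
  intro x hx
  simp only [T, Finset.coe_image, Set.mem_image, Finset.mem_coe, Finset.mem_filter,
    Finset.mem_product, Finset.mem_range] at hx
  obtain ⟨⟨i, j⟩, ⟨⟨h1, h2⟩, h3⟩, rfl⟩ := hx
  exact pow_mem_V (by omega)

instance V_findim (n : ℕ) : Module.Finite ℂ (V n) :=
  Module.Finite.span_of_finite ℂ (T n).finite_toSet

lemma finrank_V_le (n : ℕ) : finrank ℂ (V n) ≤ (n + 1) ^ 2 := by
  have h1 : finrank ℂ (V n) ≤ (T n).card := finrank_span_finset_le_card (T n)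
  refine h1.trans ?_
  refine (Finset.card_image_le).trans ?_
  refine (Finset.card_filter_le _ _).trans ?_
  rw [Finset.card_product, Finset.card_range]
  ring_nf
  omega

lemma mul_sandwich_mem {s : ℕ} {h : E} (hh : h ∈ V s) (i l : ℕ) :
    M ^ i * h * D ^ l ∈ V (i + s + l) := by
  induction hh using span_induction with
  | mem x hx =>
    simp only [T, Finset.coe_image, Set.mem_image, Finset.mem_coe, Finset.mem_filter,
      Finset.mem_product, Finset.mem_range] at hx
    obtain ⟨⟨a, b⟩, ⟨⟨h1, h2⟩, h3⟩, rfl⟩ := hx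
    have : M ^ i * (M ^ a * D ^ b) * D ^ l = M ^ (i + a) * D ^ (b + l) := by
      rw [pow_add, pow_add, ← mul_assoc, ← mul_assoc, mul_assoc (M ^ i * M ^ a)]
    rw [this]
    exact pow_mem_V (by omega)
  | zero => simp
  | add x y hx hy ihx ihy =>
    have : M ^ i * (x + y) * D ^ l = M ^ i * x * D ^ l + M ^ i * y * D ^ l := by
      rw [mul_add, add_mul]
    rw [this]; exact add_mem ihx ihy
  | smul c x hx ihx =>
    have : M ^ i * (c • x) * D ^ l = c • (M ^ i * x * D ^ l) := by
      rw [mul_smul_comm, smul_mul_assoc]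
    rw [this]; exact smul_mem _ _ ihx

lemma D_mul_mem {s : ℕ} {h : E} (hh : h ∈ V s) : D * h ∈ V (s + 1) := by
  induction hh using span_induction with
  | mem x hx =>
    simp only [T, Finset.coe_image, Set.mem_image, Finset.mem_coe, Finset.mem_filter,
      Finset.mem_product, Finset.mem_range] at hx
    obtain ⟨⟨a, b⟩, ⟨⟨h1, h2⟩, h3⟩, rfl⟩ := hx
    have : D * (M ^ a * D ^ b) = M ^ a * D ^ (b + 1) + (a : ℂ) • (M ^ (a - 1) * D ^ b) := by
      rw [← mul_assoc, D_mul_M_pow, add_mul, smul_mul_assoc, mul_assoc, ← pow_succ']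
    rw [this]
    exact add_mem (pow_mem_V (by omega)) (smul_mem _ _ (pow_mem_V (by omega)))
  | zero => simp
  | add x y hx hy ihx ihy => rw [mul_add]; exact add_mem ihx ihy
  | smul c x hx ihx => rw [mul_smul_comm]; exact smul_mem _ _ ihx

lemma D_pow_mul_M_pow_mem (j k : ℕ) : D ^ j * M ^ k ∈ V (j + k) := by
  induction j with
  | zero => simpa using pow_mem_V (i := k) (j := 0) (by omega)
  | succ m ih =>
    have : D ^ (m + 1) * M ^ k = D * (D ^ m * M ^ k) := by
      rw [pow_succ', mul_assoc]
    rw [this]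
    exact V_mono (by omega) (D_mul_mem ih)

lemma mul_mem_V {x y : E} {n m : ℕ} (hx : x ∈ V n) (hy : y ∈ V m) : x * y ∈ V (n + m) := by
  induction hy using span_induction with
  | mem z hz =>
    simp only [T, Finset.coe_image, Set.mem_image, Finset.mem_coe, Finset.mem_filter,
      Finset.mem_product, Finset.mem_range] at hz
    obtain ⟨⟨k, l⟩, ⟨⟨h1, h2⟩, h3⟩, rfl⟩ := hz
    -- x * (M^k*D^l) for x ∈ V n
    clear h1 h2
    induction hx using span_induction with
    | mem w hw =>
      simp only [T, Finset.coe_image, Set.mem_image, Finset.mem_coe, Finset.mem_filter,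
        Finset.mem_product, Finset.mem_range] at hw
      obtain ⟨⟨i, j⟩, ⟨⟨g1, g2⟩, g3⟩, rfl⟩ := hw
      have : M ^ i * D ^ j * (M ^ k * D ^ l) = M ^ i * (D ^ j * M ^ k) * D ^ l := by
        rw [mul_assoc, mul_assoc, mul_assoc, ← mul_assoc (D ^ j)]
      rw [this]
      exact V_mono (by omega) (mul_sandwich_mem (D_pow_mul_M_pow_mem j k) i l)
    | zero => simp
    | add a b ha hb iha ihb => rw [add_mul]; exact add_mem iha ihb
    | smul c a ha iha => rw [smul_mul_assoc]; exact smul_mem _ _ iha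
  | zero => simp
  | add a b ha hb iha ihb => rw [mul_add]; exact add_mem iha ihb
  | smul c a ha iha => rw [mul_smul_comm]; exact smul_mem _ _ iha


noncomputable def W : Subalgebra ℂ E where
  carrier := {x | ∃ n, x ∈ V n}
  mul_mem' := by
    rintro x y ⟨n, hx⟩ ⟨m, hy⟩
    exact ⟨n + m, mul_mem_V hx hy⟩
  add_mem' := by
    rintro x y ⟨n, hx⟩ ⟨m, hy⟩
    exact ⟨max n m, add_mem (V_mono (le_max_left n m) hx) (V_mono (le_max_right n m) hy)⟩
  algebraMap_mem' := by
    intro r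
    refine ⟨0, ?_⟩
    have : (algebraMap ℂ E) r = r • (M ^ 0 * D ^ 0) := by
      simp [Algebra.algebraMap_eq_smul_one]
    rw [this]
    exact smul_mem _ _ (pow_mem_V (le_refl 0))

lemma exists_mem_V {f : E} (hf : f ∈ Algebra.adjoin ℂ ({M, D} : Set E)) : ∃ n, f ∈ V n := by
  have hle : Algebra.adjoin ℂ ({M, D} : Set E) ≤ W := by
    apply Algebra.adjoin_le
    rintro x (rfl | rfl)
    · exact ⟨1, by simpa using pow_mem_V (i := 1) (j := 0) (by omega)⟩
    · exact ⟨1, by simpa using pow_mem_V (i := 0) (j := 1) (by omega)⟩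
  exact hle hf

lemma V_le_H (n : ℕ) {x : E} (hx : x ∈ V n) : x ∈ Algebra.adjoin ℂ ({M, D} : Set E) := by
  have : V n ≤ Subalgebra.toSubmodule (Algebra.adjoin ℂ ({M, D} : Set E)) := by
    apply span_le.2
    intro y hy
    simp only [T, Finset.coe_image, Set.mem_image, Finset.mem_coe, Finset.mem_filter,
      Finset.mem_product, Finset.mem_range] at hy
    obtain ⟨⟨i, j⟩, _, rfl⟩ := hy
    simp only [SetLike.mem_coe, Subalgebra.mem_toSubmodule]
    exact mul_mem (pow_mem (Algebra.subset_adjoin (by simp)) i)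
      (pow_mem (Algebra.subset_adjoin (by simp)) j)
  exact this hx

lemma two_pow_helper (c : ℕ) : ∃ j : ℕ, (c * j + 1) ^ 2 < 2 ^ j := by
  have key : ∀ c' : ℕ, c' * (2 * c' + 4) + 1 < 2 ^ (2 * c' + 4) := by
    intro c'
    have h1 : c' + 1 ≤ 2 ^ c' := Nat.lt_two_pow_self (n := c')
    have h2 : 2 ^ (2 * c' + 4) = (2 ^ (c' + 2)) * (2 ^ (c' + 2)) := by
      rw [← pow_add]; ring_nf
    have h3 : 2 ^ (c' + 2) = 4 * 2 ^ c' := by rw [pow_add]; ring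
    nlinarith [h1, h2, h3]
  refine ⟨2 * (2 * (2 * c) + 4), ?_⟩
  set i := 2 * (2 * c) + 4 with hi
  have hk : 2 * c * i + 1 < 2 ^ i := key (2 * c)
  have h4 : c * (2 * i) + 1 = 2 * c * i + 1 := by ring
  have h5 : 2 ^ (2 * i) = (2 ^ i) ^ 2 := by rw [mul_comm 2 i, pow_mul]
  rw [h4, h5]
  exact Nat.pow_lt_pow_left hk (by norm_num)

lemma finrank_V_zero_pos : 0 < finrank ℂ (V 0) := by
  have h1 : (1 : E) ∈ V 0 := by simpa using pow_mem_V (i := 0) (j := 0) (le_refl 0)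
  refine (Module.finrank_pos_iff (R := ℂ) (M := V 0)).mpr ?_
  exact ⟨⟨⟨1, h1⟩, 0, by simp [Subtype.ext_iff, one_ne_zero_E]⟩⟩

lemma exists_good_n (d : ℕ) : ∃ n, finrank ℂ (V (n + d)) < 2 * finrank ℂ (V n) := by
  by_contra hcon
  push_neg at hcon
  have key : ∀ j : ℕ, 2 ^ j ≤ finrank ℂ (V (j * d)) := by
    intro j
    induction j with
    | zero => rw [Nat.zero_mul, pow_zero]; exact finrank_V_zero_pos
    | succ m ih =>
      have h1 : 2 * finrank ℂ (V (m * d)) ≤ finrank ℂ (V (m * d + d)) := hcon (m * d)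
      have h2 : (m + 1) * d = m * d + d := by ring
      rw [h2, pow_succ]
      omega
  obtain ⟨j, hj⟩ := two_pow_helper d
  have h1 := key j
  have h2 := finrank_V_le (j * d)
  have h3 : (j * d + 1) ^ 2 = (d * j + 1) ^ 2 := by ring_nf
  omega


lemma exists_relation {f g : E} (hf : f ∈ Algebra.adjoin ℂ ({M, D} : Set E))
    (hg : g ∈ Algebra.adjoin ℂ ({M, D} : Set E)) :
    ∃ a b : E, a ∈ Algebra.adjoin ℂ ({M, D} : Set E) ∧ b ∈ Algebra.adjoin ℂ ({M, D} : Set E) ∧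
      (a ≠ 0 ∨ b ≠ 0) ∧ a * f = b * g := by
  obtain ⟨df, hfV⟩ := exists_mem_V hf
  obtain ⟨dg, hgV⟩ := exists_mem_V hg
  set d := max df dg with hd
  have hfV' : f ∈ V d := V_mono (le_max_left _ _) hfV
  have hgV' : g ∈ V d := V_mono (le_max_right _ _) hgV
  obtain ⟨n, hn⟩ := exists_good_n d
  let φ : (V n × V n) →ₗ[ℂ] V (n + d) :=
    { toFun := fun p => ⟨(p.1 : E) * f - (p.2 : E) * g,
        sub_mem (mul_mem_V p.1.2 hfV') (mul_mem_V p.2.2 hgV')⟩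
      map_add' := by
        intro p q
        apply Subtype.ext
        simp only [Prod.fst_add, Prod.snd_add, Submodule.coe_add, add_mul]
        abel
      map_smul' := by
        intro c p
        apply Subtype.ext
        simp only [Prod.smul_fst, Prod.smul_snd, SetLike.val_smul, RingHom.id_apply,
          smul_mul_assoc, smul_sub] }
  have hni : ¬ Function.Injective φ := by
    intro hinj
    haveI : Module.Free ℂ ↥(V n) := Module.Free.of_divisionRing ℂ ↥(V n)
    have h1 := LinearMap.finrank_le_finrank_of_injective hinj
    rw [Module.finrank_prod] at h1
    omega
  rw [Function.not_injective_iff] at hni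
  obtain ⟨p, q, hpq, hne⟩ := hni
  have h0 : (p.1 : E) * f - (p.2 : E) * g = (q.1 : E) * f - (q.2 : E) * g :=
    congrArg Subtype.val hpq
  have h1 : ((p.1 : E) - q.1) * f = ((p.2 : E) - q.2) * g := by
    rw [sub_mul, sub_mul]
    exact sub_eq_sub_iff_sub_eq_sub.mp h0
  refine ⟨(p.1 : E) - q.1, (p.2 : E) - q.2,
    sub_mem (V_le_H n p.1.2) (V_le_H n q.1.2),
    sub_mem (V_le_H n p.2.2) (V_le_H n q.2.2), ?_, h1⟩
  by_contra hc
  push_neg at hc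
  obtain ⟨hc1, hc2⟩ := hc
  apply hne
  have e1 : p.1 = q.1 := Subtype.coe_injective (by
    exact sub_eq_zero.mp hc1)
  have e2 : p.2 = q.2 := Subtype.coe_injective (by
    exact sub_eq_zero.mp hc2)
  exact Prod.ext e1 e2


/-- Weight decomposition with polynomial coefficients:
`h (X^n) = ∑ w, q w (n) • X^(n+w)`, valid for all `n`, where `q w` vanishes at
the (finitely many) naturals `n` with `n + w < 0`. -/
def Rep (h : E) : Prop :=
  ∃ (s : Finset ℤ) (q : ℤ → Polynomial ℂ),
    (∀ w, w ∉ s → q w = 0) ∧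
    (∀ (w : ℤ) (n : ℕ), (n : ℤ) + w < 0 → (q w).eval (n : ℂ) = 0) ∧
    (∀ n : ℕ, h (X ^ n) = ∑ w ∈ s, (q w).eval (n : ℂ) • X ^ ((n : ℤ) + w).toNat)

lemma rep_M : Rep M := by
  refine ⟨{1}, fun w => if w = 1 then 1 else 0, ?_, ?_, ?_⟩
  · intro w hw
    simp only [Finset.mem_singleton] at hw
    simp [hw]
  · intro w n hlt
    rcases eq_or_ne w 1 with rfl | hw
    · omega
    · simp [hw]
  · intro n
    have ht : ((n : ℤ) + 1).toNat = n + 1 := by omega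
    simp only [Finset.sum_singleton, if_pos rfl, if_true, eval_one, one_smul, ht]
    rw [M_apply, ← pow_succ']

lemma rep_D : Rep D := by
  refine ⟨{-1}, fun w => if w = -1 then X else 0, ?_, ?_, ?_⟩
  · intro w hw
    simp only [Finset.mem_singleton] at hw
    simp [hw]
  · intro w n hlt
    rcases eq_or_ne w (-1) with rfl | hw
    · have : n = 0 := by omega
      subst this
      simp
    · simp [hw]
  · intro n
    have ht : ((n : ℤ) + (-1)).toNat = n - 1 := by omega
    simp only [Finset.sum_singleton, if_pos rfl, if_true, eval_X, ht]
    rw [D_apply, derivative_X_pow, smul_eq_C_mul]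

lemma rep_algebraMap (r : ℂ) : Rep ((algebraMap ℂ E) r) := by
  refine ⟨{0}, fun w => if w = 0 then C r else 0, ?_, ?_, ?_⟩
  · intro w hw
    simp only [Finset.mem_singleton] at hw
    simp [hw]
  · intro w n hlt
    rcases eq_or_ne w 0 with rfl | hw
    · omega
    · simp [hw]
  · intro n
    have ht : ((n : ℤ) + 0).toNat = n := by omega
    simp only [Finset.sum_singleton, if_pos rfl, if_true, eval_C, ht]
    rw [Module.algebraMap_end_apply]

lemma rep_add {h k : E} (Rh : Rep h) (Rk : Rep k) : Rep (h + k) := by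
  obtain ⟨sh, qh, hsh, hah, hh⟩ := Rh
  obtain ⟨sk, qk, hsk, hak, hk⟩ := Rk
  refine ⟨sh ∪ sk, fun w => qh w + qk w, ?_, ?_, ?_⟩
  · intro w hw
    rw [Finset.mem_union] at hw
    push_neg at hw
    show qh w + qk w = 0
    rw [hsh _ hw.1, hsk _ hw.2, add_zero]
  · intro w n hlt
    rw [eval_add, hah w n hlt, hak w n hlt, add_zero]
  · intro n
    have e1 : h (X ^ n) = ∑ w ∈ sh ∪ sk, (qh w).eval (n : ℂ) • X ^ ((n : ℤ) + w).toNat := by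
      rw [hh n]
      apply Finset.sum_subset Finset.subset_union_left
      intro w _ hw
      rw [hsh _ hw]
      simp
    have e2 : k (X ^ n) = ∑ w ∈ sh ∪ sk, (qk w).eval (n : ℂ) • X ^ ((n : ℤ) + w).toNat := by
      rw [hk n]
      apply Finset.sum_subset Finset.subset_union_right
      intro w _ hw
      rw [hsk _ hw]
      simp
    rw [LinearMap.add_apply, e1, e2, ← Finset.sum_add_distrib]
    apply Finset.sum_congr rfl
    intro w _
    rw [eval_add, add_smul]

open scoped Pointwise in
lemma rep_mul {h k : E} (Rh : Rep h) (Rk : Rep k) : Rep (h * k) := by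
  obtain ⟨sh, qh, hsh, hah, hh⟩ := Rh
  obtain ⟨sk, qk, hsk, hak, hk⟩ := Rk
  refine ⟨sh + sk, fun u => ∑ w ∈ sk, (qh (u - w)).comp (X + C (w : ℂ)) * qk w, ?_, ?_, ?_⟩
  · intro u hu
    apply Finset.sum_eq_zero
    intro w hw
    have hmem : u - w ∉ sh := by
      intro hmem
      exact hu (Finset.mem_add.mpr ⟨u - w, hmem, w, hw, by ring⟩)
    rw [hsh _ hmem, zero_comp, zero_mul]
  · intro u n hlt
    show eval (n : ℂ) (∑ w ∈ sk, (qh (u - w)).comp (X + C (w : ℂ)) * qk w) = 0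
    rw [eval_finset_sum]
    apply Finset.sum_eq_zero
    intro w hw
    rw [eval_mul, eval_comp, eval_add, eval_X, eval_C]
    by_cases hnw : (n : ℤ) + w < 0
    · rw [hak w n hnw, mul_zero]
    · push_neg at hnw
      set m := ((n : ℤ) + w).toNat with hm
      have hmz : (m : ℤ) = (n : ℤ) + w := Int.toNat_of_nonneg (by omega)
      have hmc : ((m : ℕ) : ℂ) = (n : ℂ) + (w : ℂ) := by
        exact_mod_cast congrArg (Int.cast : ℤ → ℂ) hmz
      rw [← hmc, hah (u - w) m (by omega), zero_mul]
  · intro n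
    have expand : (h * k) (X ^ n)
        = ∑ w ∈ sk, (qk w).eval (n : ℂ) • h (X ^ ((n : ℤ) + w).toNat) := by
      rw [Module.End.mul_apply, hk n, map_sum]
      simp only [map_smul]
    rw [expand]
    show _ = ∑ u ∈ sh + sk,
      (∑ w ∈ sk, (qh (u - w)).comp (X + C (w : ℂ)) * qk w).eval (n : ℂ)
        • X ^ ((n : ℤ) + u).toNat
    have rhs : ∑ u ∈ sh + sk,
          (∑ w ∈ sk, (qh (u - w)).comp (X + C (w : ℂ)) * qk w).eval (n : ℂ)
            • X ^ ((n : ℤ) + u).toNat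
        = ∑ w ∈ sk, ∑ u ∈ sh + sk,
            ((qh (u - w)).eval ((n : ℂ) + (w : ℂ)) * (qk w).eval (n : ℂ))
              • (X ^ ((n : ℤ) + u).toNat : Polynomial ℂ) := by
      simp only [eval_finset_sum, Finset.sum_smul, eval_mul, eval_comp, eval_add, eval_X, eval_C]
      exact Finset.sum_comm
    rw [rhs]
    apply Finset.sum_congr rfl
    intro w hw
    by_cases hnw : (n : ℤ) + w < 0
    · rw [hak w n hnw, zero_smul]
      symm
      apply Finset.sum_eq_zero
      intro u _
      rw [mul_zero, zero_smul]
    · push_neg at hnw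
      set m := ((n : ℤ) + w).toNat with hm
      have hmz : (m : ℤ) = (n : ℤ) + w := Int.toNat_of_nonneg (by omega)
      have hmc : ((m : ℕ) : ℂ) = (n : ℂ) + (w : ℂ) := by
        exact_mod_cast congrArg (Int.cast : ℤ → ℂ) hmz
      rw [hh m, Finset.smul_sum]
      have himg : sh.image (· + w) ⊆ sh + sk := by
        intro u hu
        simp only [Finset.mem_image] at hu
        obtain ⟨w', hw', rfl⟩ := hu
        exact Finset.mem_add.mpr ⟨w', hw', w, hw, rfl⟩
      have hvan : ∀ u ∈ sh + sk, u ∉ sh.image (· + w) →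
          ((qh (u - w)).eval ((n : ℂ) + (w : ℂ)) * (qk w).eval (n : ℂ))
            • (X ^ ((n : ℤ) + u).toNat : Polynomial ℂ) = 0 := by
        intro u _ hu
        have : u - w ∉ sh := by
          intro hmem
          exact hu (Finset.mem_image.mpr ⟨u - w, hmem, by ring⟩)
        rw [hsh _ this, eval_zero, zero_mul, zero_smul]
      rw [← Finset.sum_subset himg hvan]
      rw [Finset.sum_image (by intro x _ y _ hxy; simp only at hxy; omega)]
      apply Finset.sum_congr rfl
      intro w' _
      have e1 : w' + w - w = w' := by ring
      have e2 : ((m : ℤ) + w').toNat = ((n : ℤ) + (w' + w)).toNat := by omega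
      rw [e1, smul_smul, hmc, e2, mul_comm]

lemma rep_of_mem {h : E} (hh : h ∈ Algebra.adjoin ℂ ({M, D} : Set E)) : Rep h := by
  induction hh using Algebra.adjoin_induction with
  | mem x hx =>
    rcases hx with rfl | hx
    · exact rep_M
    · rw [Set.mem_singleton_iff] at hx
      subst hx
      exact rep_D
  | algebraMap r => exact rep_algebraMap r
  | add x y _ _ ihx ihy => exact rep_add ihx ihy
  | mul x y _ _ ihx ihy => exact rep_mul ihx ihy


lemma ext_pow {h : E} (H : ∀ n : ℕ, h (X ^ n) = 0) : h = 0 := by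
  apply LinearMap.ext
  intro p
  rw [LinearMap.zero_apply]
  induction p using Polynomial.induction_on' with
  | add p q hp hq => rw [map_add, hp, hq, add_zero]
  | monomial n a => rw [← C_mul_X_pow_eq_monomial, ← smul_eq_C_mul, map_smul, H, smul_zero]

lemma top_weight {h : E} (h0 : h ≠ 0) (s : Finset ℤ) (q : ℤ → Polynomial ℂ)
    (hs : ∀ w, w ∉ s → q w = 0)
    (hrep : ∀ n : ℕ, h (X ^ n) = ∑ w ∈ s, (q w).eval (n : ℂ) • X ^ ((n : ℤ) + w).toNat) :
    ∃ w0, q w0 ≠ 0 ∧ ∀ w, w0 < w → q w = 0 := by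
  have hne : (s.filter fun w => q w ≠ 0).Nonempty := by
    by_contra hemp
    rw [Finset.not_nonempty_iff_eq_empty, Finset.filter_eq_empty_iff] at hemp
    apply h0
    apply ext_pow
    intro n
    rw [hrep n]
    apply Finset.sum_eq_zero
    intro w hw
    have : q w = 0 := not_not.mp (hemp hw)
    rw [this, eval_zero, zero_smul]
  refine ⟨(s.filter fun w => q w ≠ 0).max' hne, ?_, ?_⟩
  · exact (Finset.mem_filter.mp (Finset.max'_mem _ hne)).2
  · intro w hlt
    by_contra hq
    have hw : w ∈ s := by
      by_contra h'
      exact hq (hs _ h')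
    have : w ≤ (s.filter fun w => q w ≠ 0).max' hne :=
      Finset.le_max' _ _ (Finset.mem_filter.mpr ⟨hw, hq⟩)
    omega

lemma mul_ne_zero_of_rep {h k : E} (Rh : Rep h) (Rk : Rep k) (h0 : h ≠ 0) (k0 : k ≠ 0) :
    h * k ≠ 0 := by
  obtain ⟨sh, qh, hsh, hah, hh⟩ := Rh
  obtain ⟨sk, qk, hsk, hak, hk⟩ := Rk
  obtain ⟨wh, hwh, hmaxh⟩ := top_weight h0 sh qh hsh hh
  obtain ⟨wk, hwk, hmaxk⟩ := top_weight k0 sk qk hsk hk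
  have hwh_mem : wh ∈ sh := by
    by_contra h'
    exact hwh (hsh _ h')
  have hwk_mem : wk ∈ sk := by
    by_contra h'
    exact hwk (hsk _ h')
  set P : Polynomial ℂ := (qh wh).comp (X + C (wk : ℂ)) * qk wk with hP
  have hPne : P ≠ 0 := by
    apply mul_ne_zero _ hwk
    intro hc
    apply hwh
    have hcomp : ((qh wh).comp (X + C (wk : ℂ))).comp (X - C (wk : ℂ)) = qh wh := by
      rw [comp_assoc]
      have : (X + C (wk : ℂ)).comp (X - C (wk : ℂ)) = X := by
        simp [add_comp, X_comp, C_comp]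
      rw [this, comp_X]
    rw [← hcomp, hc, zero_comp]
  have hfin : {x : ℂ | P.IsRoot x}.Finite := P.finite_setOf_isRoot hPne
  have hfin2 : {n : ℕ | P.IsRoot ((n : ℕ) : ℂ)}.Finite := by
    have : {n : ℕ | P.IsRoot ((n : ℕ) : ℂ)} = (fun n : ℕ => (n : ℂ)) ⁻¹' {x : ℂ | P.IsRoot x} :=
      rfl
    rw [this]
    exact hfin.preimage (Nat.cast_injective.injOn)
  have hBfin : ({n : ℕ | P.IsRoot ((n : ℕ) : ℂ)} ∪ Set.Iio (wh.natAbs + wk.natAbs)).Finite :=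
    hfin2.union (Set.finite_Iio _)
  obtain ⟨n, hn⟩ := hBfin.infinite_compl.nonempty
  simp only [Set.mem_compl_iff, Set.mem_union, Set.mem_setOf_eq, Set.mem_Iio, not_or,
    not_lt] at hn
  obtain ⟨hnroot, hnB⟩ := hn
  have hnk : (0 : ℤ) ≤ (n : ℤ) + wk := by omega
  have hnkh : (0 : ℤ) ≤ (n : ℤ) + wk + wh := by omega
  set m : ℕ := ((n : ℤ) + wk).toNat with hm
  have hmz : (m : ℤ) = (n : ℤ) + wk := Int.toNat_of_nonneg hnk
  have hmc : ((m : ℕ) : ℂ) = (n : ℂ) + (wk : ℂ) := by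
    exact_mod_cast congrArg (Int.cast : ℤ → ℂ) hmz
  set e : ℕ := ((n : ℤ) + wk + wh).toNat with he
  have hexp : (h * k) (X ^ n) = ∑ w ∈ sk, ∑ w' ∈ sh,
      ((qh w').eval ((((n : ℤ) + w).toNat : ℕ) : ℂ) * (qk w).eval (n : ℂ))
        • (X : Polynomial ℂ) ^ (((((n : ℤ) + w).toNat : ℕ) : ℤ) + w').toNat := by
    rw [Module.End.mul_apply, hk n, map_sum]
    simp only [map_smul]
    apply Finset.sum_congr rfl
    intro w _
    rw [hh, Finset.smul_sum]
    apply Finset.sum_congr rfl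
    intro w' _
    rw [smul_smul, mul_comm]
  have hcoeff : ((h * k) (X ^ n)).coeff e
      = (qh wh).eval ((n : ℂ) + (wk : ℂ)) * (qk wk).eval (n : ℂ) := by
    rw [hexp, finset_sum_coeff]
    rw [Finset.sum_eq_single_of_mem wk hwk_mem ?other]
    case other =>
      intro w hwmem hwne
      rw [finset_sum_coeff]
      apply Finset.sum_eq_zero
      intro w' _
      by_cases hgt : wk < w
      · rw [coeff_smul, hmaxk _ hgt, eval_zero, mul_zero, zero_smul]
      · by_cases hneg : (n : ℤ) + w < 0
        · rw [coeff_smul, hak w n hneg, mul_zero, zero_smul]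
        · push_neg at hneg
          have hmwz : ((((n : ℤ) + w).toNat : ℕ) : ℤ) = (n : ℤ) + w :=
            Int.toNat_of_nonneg hneg
          by_cases hneg2 : ((n : ℤ) + w) + w' < 0
          · rw [coeff_smul, hah w' (((n : ℤ) + w).toNat) (by omega), zero_mul, zero_smul]
          · by_cases heqw : w + w' = wk + wh
            · have hw'gt : wh < w' := by omega
              rw [coeff_smul, hmaxh _ hw'gt, eval_zero, zero_mul, zero_smul]
            · rw [coeff_smul, coeff_X_pow, if_neg (by omega), smul_zero]
    rw [finset_sum_coeff]
    rw [Finset.sum_eq_single_of_mem wh hwh_mem ?inner]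
    case inner =>
      intro w' _ hw'ne
      by_cases hgt : wh < w'
      · rw [coeff_smul, hmaxh _ hgt, eval_zero, zero_mul, zero_smul]
      · by_cases hneg2 : ((m : ℤ) + w') < 0
        · rw [coeff_smul, hah w' m (by omega), zero_mul, zero_smul]
        · rw [coeff_smul, coeff_X_pow, if_neg (by omega), smul_zero]
    rw [coeff_smul, coeff_X_pow, if_pos (by omega), smul_eq_mul, mul_one, hmc]
  intro hcon
  have hzero : ((h * k) (X ^ n)).coeff e = 0 := by
    rw [hcon, LinearMap.zero_apply, coeff_zero]
  rw [hcoeff] at hzero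
  apply hnroot
  rw [IsRoot.def, hP, eval_mul, eval_comp, eval_add, eval_X, eval_C, hzero]

lemma mul_ne_zero_H {h k : E} (hh : h ∈ Algebra.adjoin ℂ ({M, D} : Set E))
    (hk : k ∈ Algebra.adjoin ℂ ({M, D} : Set E)) (h0 : h ≠ 0) (k0 : k ≠ 0) : h * k ≠ 0 :=
  mul_ne_zero_of_rep (rep_of_mem hh) (rep_of_mem hk) h0 k0

end Heis

/-- Theorem 2.3: any two nonzero elements of the Heisenberg algebra are left
comeasurable. -/
theorem heisenberg_left_comeasurable
    (f g : Module.End ℂ (Polynomial ℂ))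
    (hf : f ∈ Algebra.adjoin ℂ ({M, D} : Set (Module.End ℂ (Polynomial ℂ))))
    (hg : g ∈ Algebra.adjoin ℂ ({M, D} : Set (Module.End ℂ (Polynomial ℂ))))
    (hf0 : f ≠ 0) (hg0 : g ≠ 0) :
    ∃ a ∈ Algebra.adjoin ℂ ({M, D} : Set (Module.End ℂ (Polynomial ℂ))),
      ∃ b ∈ Algebra.adjoin ℂ ({M, D} : Set (Module.End ℂ (Polynomial ℂ))),
        a ≠ 0 ∧ b ≠ 0 ∧ a * f = b * g := by
  obtain ⟨a, b, haH, hbH, hne, heq⟩ := Heis.exists_relation hf hg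
  have ha : a ≠ 0 := by
    intro ha0
    rcases hne with h | hb
    · exact h ha0
    · apply Heis.mul_ne_zero_H hbH hg hb hg0
      rw [← heq, ha0, zero_mul]
  have hb : b ≠ 0 := by
    intro hb0
    apply Heis.mul_ne_zero_H haH hf ha hf0
    rw [heq, hb0, zero_mul]
  exact ⟨a, haH, b, hbH, ha, hb, heq⟩
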